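/- Let s ≥ 3 and let G be a (2s−2)-regular finite simple graph with G → (s, s)^v. Then χ(G) = 2s−1. -/

import Mathlib

/-- `G → (a₁,…,a_r)ᵛ`: for every coloring of the vertices of `G` with `r` colors,
there is a color `i` and a clique of `G` on `a i` vertices all of whose vertices
receive color `i`. -/
def VArrows {V : Type*} {r : ℕ} (G : SimpleGraph V) (a : Fin r → ℕ) : Prop :=
  ∀ c : V → Fin r, ∃ i : Fin r, ∃ t : Finset V,
    G.IsNClique (a i) t ∧ ∀ v ∈ t, c v = i

/-- Greedy coloring: a finite graph with all degrees `< n` is `n`-colorable. -/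
theorem greedy_aux (n : ℕ) : ∀ (N : ℕ) (V : Type u) (_ : Fintype V)
    (G : SimpleGraph V) (_ : DecidableRel G.Adj),
    Fintype.card V = N → (∀ v, G.degree v < n) → G.Colorable n := by
  intro N
  induction N with
  | zero =>
    intro V _ G _ hcard _
    have : IsEmpty V := Fintype.card_eq_zero_iff.mp hcard
    exact SimpleGraph.Colorable.of_isEmpty (G := G) n
  | succ N ih =>
    intro V _ G _ hcard hdeg
    classical
    have : Nonempty V := Fintype.card_pos_iff.mp (by omega)
    obtain ⟨v⟩ := this
    let W := {u : V // u ≠ v}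
    let G' : SimpleGraph W := G.comap Subtype.val
    have hdecW : DecidableRel G'.Adj := fun a b => by
      simp only [SimpleGraph.comap_adj, G']; infer_instance
    have hcardW : Fintype.card W = N := by
      have h1 : Fintype.card {u : V // u = v} = 1 := Fintype.card_subtype_eq v
      have h2 := Fintype.card_subtype_compl (fun u : V => u = v)
      simp only [h1] at h2
      have : Fintype.card {u : V // ¬ u = v} = Fintype.card V - 1 := h2
      simpa [W, hcard] using this
    have hdegW : ∀ u : W, G'.degree u < n := by
      intro u
      refine lt_of_le_of_lt ?_ (hdeg u.1)
      unfold SimpleGraph.degree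
      apply Finset.card_le_card_of_injOn (fun a => a.1)
      · intro a ha
        simp only [Finset.mem_coe, SimpleGraph.mem_neighborFinset] at ha ⊢
        exact ha
      · exact Subtype.val_injective.injOn
    obtain ⟨C'⟩ := ih W inferInstance G' hdecW hcardW hdegW
    -- colors used by neighbors of v
    have hne : ∀ u ∈ G.neighborFinset v, u ≠ v := by
      intro u hu
      rintro rfl
      exact G.irrefl ((G.mem_neighborFinset _ _).mp hu)
    let used : Finset (Fin n) :=
      (G.neighborFinset v).attach.image (fun u => C' ⟨u.1, hne u.1 u.2⟩)
    have hused : used.card < n := by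
      calc used.card ≤ (G.neighborFinset v).attach.card := Finset.card_image_le
        _ = G.degree v := by rw [Finset.card_attach]; rfl
        _ < n := hdeg v
    have : ∃ c0 : Fin n, c0 ∉ used := by
      by_contra h
      push_neg at h
      have : (Finset.univ : Finset (Fin n)) ⊆ used := fun x _ => h x
      have := Finset.card_le_card this
      simp at this
      omega
    obtain ⟨c0, hc0⟩ := this
    let f : V → Fin n := fun u => if h : u = v then c0 else C' ⟨u, h⟩
    refine ⟨SimpleGraph.Coloring.mk f ?_⟩
    intro a b hab
    by_cases ha : a = v <;> by_cases hb : b = v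
    · exact absurd (ha ▸ hb ▸ hab) (G.irrefl)
    · subst ha
      simp only [f, dif_pos, dif_neg hb]
      intro heq
      apply hc0
      rw [heq]
      exact Finset.mem_image.mpr ⟨⟨b, (G.mem_neighborFinset _ _).mpr hab⟩,
        Finset.mem_attach _ _, rfl⟩
    · subst hb
      simp only [f, dif_pos, dif_neg ha]
      intro heq
      apply hc0
      rw [← heq]
      exact Finset.mem_image.mpr ⟨⟨a, (G.mem_neighborFinset _ _).mpr hab.symm⟩,
        Finset.mem_attach _ _, rfl⟩
    · simp only [f, dif_neg ha, dif_neg hb]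
      exact C'.valid (by exact hab : G'.Adj ⟨a, ha⟩ ⟨b, hb⟩)

/-- If `s ≥ 3` and `G` is a `(2s-2)`-regular finite graph with `G → (s,s)ᵛ`,
then `χ(G) = 2s-1`. -/
theorem stmt_13 {V : Type*} [Fintype V] (s : ℕ) (hs : 3 ≤ s)
    (G : SimpleGraph V) [DecidableRel G.Adj]
    (hreg : G.IsRegularOfDegree (2 * s - 2))
    (hGarr : VArrows G ![s, s]) :
    G.chromaticNumber = ((2 * s - 1 : ℕ) : ℕ∞) := by
  classical
  -- Upper bound
  have hcol : G.Colorable (2 * s - 1) := by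
    apply greedy_aux (2 * s - 1) (Fintype.card V) V inferInstance G inferInstance rfl
    intro v
    rw [hreg v]
    omega
  -- Lower bound
  have hncol : ¬ G.Colorable (2 * s - 2) := by
    rintro ⟨C⟩
    set c : V → Fin 2 := fun v => if (C v : ℕ) < s - 1 then 0 else 1 with hc
    obtain ⟨i, t, hclique, hcol2⟩ := hGarr c
    have hts : t.card = s := by
      have := hclique.card_eq
      fin_cases i <;> simpa using this
    have hinj : ∀ a ∈ t, ∀ b ∈ t, C a = C b → a = b := by
      intro a ha b hb hCab
      by_contra hne
      exact C.valid (hclique.isClique ha hb hne) hCab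
    have hcards : Fintype.card {v // v ∈ t} = s := by
      rw [Fintype.card_coe, hts]
    fin_cases i
    · -- all (C v : ℕ) < s - 1
      have hlt : ∀ v ∈ t, (C v : ℕ) < s - 1 := by
        intro v hv
        have := hcol2 v hv
        simp only [hc] at this
        by_contra h
        rw [if_neg h] at this
        exact absurd this (by decide)
      have : Function.Injective (fun v : {v // v ∈ t} =>
          (⟨(C v.1 : ℕ), hlt v.1 v.2⟩ : Fin (s - 1))) := by
        intro a b hab
        simp only [Fin.mk.injEq] at hab
        exact Subtype.ext (hinj a.1 a.2 b.1 b.2 (Fin.ext hab))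
      have := Fintype.card_le_of_injective _ this
      rw [hcards, Fintype.card_fin] at this
      omega
    · -- all (C v : ℕ) ≥ s - 1
      have hge : ∀ v ∈ t, s - 1 ≤ (C v : ℕ) := by
        intro v hv
        have := hcol2 v hv
        simp only [hc] at this
        by_contra h
        push_neg at h
        rw [if_pos h] at this
        exact absurd this (by decide)
      have hub : ∀ v : V, (C v : ℕ) < 2 * s - 2 := fun v => (C v).isLt
      have : Function.Injective (fun v : {v // v ∈ t} =>
          (⟨(C v.1 : ℕ) - (s - 1), by have := hub v.1; omega⟩ : Fin (s - 1))) := by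
        intro a b hab
        simp only [Fin.mk.injEq] at hab
        have ha := hge a.1 a.2
        have hb := hge b.1 b.2
        exact Subtype.ext (hinj a.1 a.2 b.1 b.2 (Fin.ext (by omega)))
      have := Fintype.card_le_of_injective _ this
      rw [hcards, Fintype.card_fin] at this
      omega
  -- combine
  have hle : G.chromaticNumber ≤ ((2 * s - 1 : ℕ) : ℕ∞) :=
    SimpleGraph.chromaticNumber_le_iff_colorable.mpr hcol
  have hlt : ((2 * s - 2 : ℕ) : ℕ∞) < G.chromaticNumber := by
    by_contra h
    push_neg at h
    exact hncol (SimpleGraph.chromaticNumber_le_iff_colorable.mp h)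
  apply le_antisymm hle
  have heq : ((2 * s - 1 : ℕ) : ℕ∞) = ((2 * s - 2 : ℕ) : ℕ∞) + 1 := by
    have : 2 * s - 1 = (2 * s - 2) + 1 := by omega
    rw [this]; push_cast; ring
  rw [heq]
  exact Order.add_one_le_of_lt hlt
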